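/- Define G(x) := (1/(4π)) log(2cosh(2πx₂) − 2cos(2πx₁)) for x = (x₁,x₂) ∈ ℝ² ∖ L. Then G is differentiable on ℝ² ∖ L and its perpendicular gradient ∇^⊥G(x) := (−∂G/∂x₂(x), ∂G/∂x₁(x)) equals K_∞(x); moreover K_∞(x) = (1/2)·(vec(cot(π·conj(⟵x))))^⊥. -/

import Mathlib

/-- Identify `ℂ` with `ℝ²` via `vec (a + b i) = (a, b)`. -/
def vec (z : ℂ) : ℝ × ℝ := (z.re, z.im)

/-- Counterclockwise rotation by 90 degrees: `(v₁, v₂)^⊥ = (-v₂, v₁)`. -/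
def perp (v : ℝ × ℝ) : ℝ × ℝ := (-v.2, v.1)

/-- Identify `ℝ²` with `ℂ`: `⟵(x₁, x₂) = x₁ + i x₂`. -/
noncomputable def toC (x : ℝ × ℝ) : ℂ := x.1 + x.2 * Complex.I

/-- The periodic Biot–Savart kernel
`K_∞ x = (-sinh(2πx₂), sin(2πx₁)) / (2(cosh(2πx₂) - cos(2πx₁)))` on `ℝ² \ L`. -/
noncomputable def Kinf (x : ℝ × ℝ) : ℝ × ℝ :=
  (2 * (Real.cosh (2 * Real.pi * x.2) - Real.cos (2 * Real.pi * x.1)))⁻¹ •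
    (-Real.sinh (2 * Real.pi * x.2), Real.sin (2 * Real.pi * x.1))

/-- The Green's function `G x = (1/(4π)) log(2 cosh(2πx₂) - 2 cos(2πx₁))`. -/
noncomputable def G (x : ℝ × ℝ) : ℝ :=
  (4 * Real.pi)⁻¹ * Real.log (2 * Real.cosh (2 * Real.pi * x.2) - 2 * Real.cos (2 * Real.pi * x.1))

lemma cot_formula (u v : ℝ) (hs : Complex.sin (↑u - ↑v * Complex.I) ≠ 0)
    (hne : Real.cosh (2 * v) - Real.cos (2 * u) ≠ 0) :
    Complex.cot (↑u - ↑v * Complex.I)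
      = (↑(Real.sin (2 * u)) + ↑(Real.sinh (2 * v)) * Complex.I)
          / ↑(Real.cosh (2 * v) - Real.cos (2 * u)) := by
  rw [Complex.cot_eq_cos_div_sin, div_eq_div_iff hs (Complex.ofReal_ne_zero.mpr hne)]
  push_cast
  rw [Complex.cos_sub, Complex.sin_sub, Complex.cos_mul_I, Complex.sin_mul_I,
    Complex.cos_two_mul, Complex.sin_two_mul, Complex.cosh_two_mul, Complex.sinh_two_mul]
  linear_combination
    (Complex.cos u * Complex.cosh v - Complex.sin u * Complex.sinh v * Complex.I) *
        Complex.cosh_sq_sub_sinh_sq (v : ℂ)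
      - 2 * (Complex.cos u * Complex.cosh v) * Complex.sin_sq_add_cos_sq (u : ℂ)
      + 2 * Complex.cos u * Complex.sinh v ^ 2 * Complex.cosh v * Complex.I_sq

/-- On `ℝ² \ L`, `G` is differentiable with `∇^⊥ G = K_∞`, and moreover
`K_∞ x = (1/2) (vec (cot (π conj (⟵x))))^⊥`. -/
theorem stmt12 (x : ℝ × ℝ) (hx : ∀ n : ℤ, x ≠ ((n : ℝ), 0)) :
    DifferentiableAt ℝ G x ∧
    (-(fderiv ℝ G x (0, 1)), fderiv ℝ G x (1, 0)) = Kinf x ∧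
    Kinf x = (1/2 : ℝ) • perp (vec (Complex.cot (Real.pi * (starRingEnd ℂ) (toC x)))) := by
  obtain ⟨a, b⟩ := x
  have hπ : (Real.pi : ℝ) ≠ 0 := Real.pi_ne_zero
  -- positivity of cosh(2πb) - cos(2πa)
  have hh : 0 < Real.cosh (2 * Real.pi * b) - Real.cos (2 * Real.pi * a) := by
    rcases eq_or_ne b 0 with hb | hb
    · subst hb
      have hc : Real.cos (2 * Real.pi * a) ≠ 1 := by
        intro hc
        obtain ⟨n, hn⟩ := (Real.cos_eq_one_iff _).mp hc
        have ha : a = (n : ℝ) := by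
          have h' : (n : ℝ) * (2 * Real.pi) = 2 * Real.pi * a := hn
          nlinarith [Real.pi_pos]
        exact hx n (by simp [ha])
      have h1 := (Real.cos_le_one (2 * Real.pi * a)).lt_of_ne hc
      simp only [mul_zero, Real.cosh_zero]
      linarith
    · have h1 : 1 < Real.cosh (2 * Real.pi * b) :=
        Real.one_lt_cosh.mpr (by simp [hπ, hb])
      linarith [Real.cos_le_one (2 * Real.pi * a)]
  have hne2 : 2 * Real.cosh (2 * Real.pi * b) - 2 * Real.cos (2 * Real.pi * a) ≠ 0 := by
    intro h0; nlinarith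
  -- derivative of G
  have hidb : HasDerivAt (fun t : ℝ => 2 * Real.pi * t) (2 * Real.pi) b := by
    simpa using (hasDerivAt_id b).const_mul (2 * Real.pi)
  have hida : HasDerivAt (fun t : ℝ => 2 * Real.pi * t) (2 * Real.pi) a := by
    simpa using (hasDerivAt_id a).const_mul (2 * Real.pi)
  have h2 : HasDerivAt (fun t : ℝ => 2 * Real.cosh (2 * Real.pi * t))
      (2 * (Real.sinh (2 * Real.pi * b) * (2 * Real.pi))) b := hidb.cosh.const_mul 2
  have h1 : HasDerivAt (fun t : ℝ => 2 * Real.cos (2 * Real.pi * t))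
      (2 * (-Real.sin (2 * Real.pi * a) * (2 * Real.pi))) a := hida.cos.const_mul 2
  have H2 : HasFDerivAt (fun p : ℝ × ℝ => 2 * Real.cosh (2 * Real.pi * p.2))
      ((2 * (Real.sinh (2 * Real.pi * b) * (2 * Real.pi))) • ContinuousLinearMap.snd ℝ ℝ ℝ)
      (a, b) := h2.comp_hasFDerivAt (f := Prod.snd) (a, b) hasFDerivAt_snd
  have H1 : HasFDerivAt (fun p : ℝ × ℝ => 2 * Real.cos (2 * Real.pi * p.1))
      ((2 * (-Real.sin (2 * Real.pi * a) * (2 * Real.pi))) • ContinuousLinearMap.fst ℝ ℝ ℝ)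
      (a, b) := h1.comp_hasFDerivAt (f := Prod.fst) (a, b) hasFDerivAt_fst
  have Hf := H2.sub H1
  have hlog : HasDerivAt (fun t : ℝ => (4 * Real.pi)⁻¹ * Real.log t)
      ((4 * Real.pi)⁻¹ * (2 * Real.cosh (2 * Real.pi * b) - 2 * Real.cos (2 * Real.pi * a))⁻¹)
      (2 * Real.cosh (2 * Real.pi * b) - 2 * Real.cos (2 * Real.pi * a)) :=
    (Real.hasDerivAt_log hne2).const_mul _
  have HG : HasFDerivAt G
      (((4 * Real.pi)⁻¹ * (2 * Real.cosh (2 * Real.pi * b) - 2 * Real.cos (2 * Real.pi * a))⁻¹) •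
        ((2 * (Real.sinh (2 * Real.pi * b) * (2 * Real.pi))) • ContinuousLinearMap.snd ℝ ℝ ℝ
          - (2 * (-Real.sin (2 * Real.pi * a) * (2 * Real.pi))) • ContinuousLinearMap.fst ℝ ℝ ℝ))
      (a, b) := hlog.comp_hasFDerivAt (f := fun p : ℝ × ℝ => 2 * Real.cosh (2 * Real.pi * p.2) - 2 * Real.cos (2 * Real.pi * p.1)) (a, b) Hf
  refine ⟨HG.differentiableAt, ?_, ?_⟩
  · rw [HG.fderiv]
    simp only [Kinf, ContinuousLinearMap.smul_apply, ContinuousLinearMap.sub_apply,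
      ContinuousLinearMap.coe_fst', ContinuousLinearMap.coe_snd', smul_eq_mul,
      Prod.smul_mk, Prod.mk.injEq]
    constructor <;> (field_simp; try ring)
  · -- the cotangent identity
    have hw : (↑Real.pi * (starRingEnd ℂ) (toC (a, b)) : ℂ)
        = ↑(Real.pi * a) - ↑(Real.pi * b) * Complex.I := by
      simp only [toC, map_add, map_mul, Complex.conj_ofReal, Complex.conj_I]
      push_cast
      ring
    have hsin : Complex.sin (↑(Real.pi * a) - ↑(Real.pi * b) * Complex.I) ≠ 0 := by
      rw [Ne, Complex.sin_eq_zero_iff]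
      rintro ⟨k, hk⟩
      have hre : Real.pi * a = (k : ℝ) * Real.pi := by
        have := congrArg Complex.re hk; simpa using this
      have him : -(Real.pi * b) = 0 := by
        have := congrArg Complex.im hk; simpa using this
      have ha : a = (k : ℝ) := by nlinarith [Real.pi_pos]
      have hb : b = 0 := by nlinarith [Real.pi_pos]
      exact hx k (by simp [ha, hb])
    have hne : Real.cosh (2 * (Real.pi * b)) - Real.cos (2 * (Real.pi * a)) ≠ 0 := by
      rw [← mul_assoc, ← mul_assoc]; exact hh.ne'
    have hcot := cot_formula (Real.pi * a) (Real.pi * b) hsin hne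
    simp only [← mul_assoc] at hcot
    rw [hw, hcot]
    have hrw : ((↑(Real.sin (2 * Real.pi * a)) + ↑(Real.sinh (2 * Real.pi * b)) * Complex.I)
          / ↑(Real.cosh (2 * Real.pi * b) - Real.cos (2 * Real.pi * a)) : ℂ)
        = ↑(Real.sin (2 * Real.pi * a) / (Real.cosh (2 * Real.pi * b) - Real.cos (2 * Real.pi * a)))
          + ↑(Real.sinh (2 * Real.pi * b) / (Real.cosh (2 * Real.pi * b) - Real.cos (2 * Real.pi * a)))
            * Complex.I := by
      push_cast
      ring
    rw [hrw]
    simp only [vec, perp, Kinf, Complex.add_re, Complex.ofReal_re, Complex.mul_re,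
      Complex.I_re, Complex.I_im, Complex.ofReal_im, Complex.add_im, Complex.mul_im,
      Prod.smul_mk, smul_eq_mul, Prod.mk.injEq]
    constructor <;> (field_simp; try ring)
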